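/- Let H ∈ (1/2,1). Then ∫_0^1 (z_H(1,s))^4 ds ≥ (c_H^4/16)·∫_0^1 s^{4(1/2−H)}(1−s)^{4(H−1/2)}(1 + s^{2H−1})^4 ds. -/

import Mathlib

open MeasureTheory Set

/-- Normalizing constant of the Mandelbrot–Van Ness kernel. -/
noncomputable def C_H (H : ℝ) : ℝ :=
  Real.sqrt (2 * H * Real.sin (Real.pi * H) * Real.Gamma (2 * H)) / Real.Gamma (H + 1/2)

/-- Normalizing constant of the Molchan–Golosov kernel. -/
noncomputable def c_H (H : ℝ) : ℝ :=
  (Real.Gamma (H + 1/2))⁻¹ *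
    Real.sqrt (2 * H * Real.Gamma (H + 1/2) * Real.Gamma (3/2 - H) / Real.Gamma (2 - 2*H))

/-- Mandelbrot–Van Ness kernel `f_H(t,s) = C_H((t-s)_+^{H-1/2} - (-s)_+^{H-1/2})`. -/
noncomputable def f_H (H t s : ℝ) : ℝ :=
  C_H H * (max (t - s) 0 ^ (H - 1/2) - max (-s) 0 ^ (H - 1/2))

/-- Molchan–Golosov kernel for `H ∈ (1/2,1)`:
`z_H(t,s) = (H-1/2) c_H s^{1/2-H} ∫_s^t u^{H-1/2}(u-s)^{H-3/2} du` for `0 < s < t`,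
and `0` otherwise. -/
noncomputable def z_H (H t s : ℝ) : ℝ :=
  if 0 < s ∧ s < t then
    (H - 1/2) * c_H H * s ^ ((1:ℝ)/2 - H) *
      ∫ u in Set.Ioo s t, u ^ (H - 1/2) * (u - s) ^ (H - 3/2)
  else 0

lemma cH_nonneg (H : ℝ) (hH : 0 < H) : 0 ≤ c_H H := by
  have h1 : 0 < Real.Gamma (H + 1/2) := Real.Gamma_pos_of_pos (by linarith)
  exact mul_nonneg (inv_nonneg.2 h1.le) (Real.sqrt_nonneg _)

/-- Integrability of `u ↦ u^p (u-s)^(p-1)` on `(s,1]`. -/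
lemma intOn_sing (p s : ℝ) (hp : 0 < p) (hs0 : 0 < s) (hs1 : s < 1) :
    IntervalIntegrable (fun u : ℝ => u ^ p * (u - s) ^ (p - 1)) volume s 1 := by
  have hbase : IntervalIntegrable (fun u : ℝ => (u - s) ^ (p - 1)) volume s 1 := by
    have h0 : IntervalIntegrable (fun x : ℝ => x ^ (p - 1)) volume 0 (1 - s) :=
      intervalIntegral.intervalIntegrable_rpow' (by linarith)
    have := h0.comp_sub_right s
    simpa using this
  refine hbase.mono_fun ?_ ?_
  · exact (by fun_prop : Measurable fun u : ℝ => u ^ p * (u - s) ^ (p - 1)).aestronglyMeasurable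
  · filter_upwards [MeasureTheory.ae_restrict_mem measurableSet_uIoc] with u hu
    rw [Set.uIoc_of_le hs1.le] at hu
    have hu0 : 0 < u := lt_trans hs0 hu.1
    have hus : 0 < u - s := sub_pos.2 hu.1
    have h1 : u ^ p ≤ 1 := Real.rpow_le_one hu0.le hu.2 hp.le
    have h2 : (0:ℝ) ≤ (u - s) ^ (p - 1) := Real.rpow_nonneg hus.le _
    rw [Real.norm_eq_abs, Real.norm_eq_abs, abs_of_nonneg h2,
      abs_of_nonneg (mul_nonneg (Real.rpow_nonneg hu0.le _) h2)]
    calc u ^ p * (u - s) ^ (p - 1) ≤ 1 * (u - s) ^ (p - 1) :=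
          mul_le_mul_of_nonneg_right h1 h2
      _ = (u - s) ^ (p - 1) := one_mul _

/-- The key lower bound on the Molchan–Golosov integral. -/
lemma key_integral_bound (p s : ℝ) (hp : 0 < p) (hs0 : 0 < s) (hs1 : s < 1) :
    (1 - s) ^ p * (1 + s ^ (2 * p)) / 2
      ≤ p * ∫ u in Set.Ioo s 1, u ^ p * (u - s) ^ (p - 1) := by
  set g : ℝ → ℝ := fun u => u ^ p * (u - s) ^ p with hg
  set φ : ℝ → ℝ := fun u => p * ((1 - s) ^ p * u ^ (2 * p - 1)) + p * (u ^ p * (u - s) ^ (p - 1))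
    with hφ
  have hab : s ≤ (1:ℝ) := hs1.le
  -- continuity of g on [s,1]
  have hcont : ContinuousOn g (Icc s 1) := by
    have c1 : Continuous fun u : ℝ => u ^ p :=
      continuous_id.rpow_const (fun x => Or.inr hp.le)
    have c2 : Continuous fun u : ℝ => (u - s) ^ p :=
      (continuous_id.sub continuous_const).rpow_const (fun x => Or.inr hp.le)
    exact (c1.mul c2).continuousOn
  -- derivative of g on (s,1)
  have hderiv : ∀ u ∈ Ioo s 1, HasDerivWithinAt g
      (p * u ^ (p - 1) * (u - s) ^ p + u ^ p * (p * (u - s) ^ (p - 1))) (Ioi u) u := by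
    intro u hu
    have hu0 : (0:ℝ) < u := lt_trans hs0 hu.1
    have hus : (0:ℝ) < u - s := sub_pos.2 hu.1
    have d1 : HasDerivAt (fun x : ℝ => x ^ p) (p * u ^ (p - 1)) u :=
      Real.hasDerivAt_rpow_const (Or.inl hu0.ne')
    have d2 : HasDerivAt (fun x : ℝ => (x - s) ^ p) (p * (u - s) ^ (p - 1)) u := by
      have h := (Real.hasDerivAt_rpow_const (p := p) (Or.inl hus.ne')).comp u
        ((hasDerivAt_id u).sub_const s)
      simpa [Function.comp_def] using h
    exact (d1.mul d2).hasDerivWithinAt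
  -- integrability of φ on [s,1]
  have hi1 : IntervalIntegrable (fun u : ℝ => p * ((1 - s) ^ p * u ^ (2 * p - 1))) volume s 1 := by
    apply ContinuousOn.intervalIntegrable
    apply ContinuousOn.mul continuousOn_const
    apply ContinuousOn.mul continuousOn_const
    intro x hx
    rw [Set.uIcc_of_le hab] at hx
    exact (Real.continuousAt_rpow_const x _
      (Or.inl (lt_of_lt_of_le hs0 hx.1).ne')).continuousWithinAt
  have hi2 : IntervalIntegrable (fun u : ℝ => p * (u ^ p * (u - s) ^ (p - 1))) volume s 1 :=
    (intOn_sing p s hp hs0 hs1).const_mul p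
  have hφint : IntegrableOn φ (Icc s 1) := by
    rw [integrableOn_Icc_iff_integrableOn_Ioc]
    have := (hi1.add hi2).1
    simpa [hφ] using this
  -- g' ≤ φ on (s,1)
  have hφg : ∀ u ∈ Ioo s 1,
      p * u ^ (p - 1) * (u - s) ^ p + u ^ p * (p * (u - s) ^ (p - 1)) ≤ φ u := by
    intro u hu
    have hu0 : (0:ℝ) < u := lt_trans hs0 hu.1
    have hus : (0:ℝ) ≤ u - s := by linarith [hu.1.le]
    have key : (u - s) ^ p ≤ (1 - s) ^ p * u ^ p := by
      have h1 : u - s ≤ u * (1 - s) := by nlinarith [hu.2.le, hs0.le]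
      calc (u - s) ^ p ≤ (u * (1 - s)) ^ p :=
            Real.rpow_le_rpow hus h1 hp.le
        _ = u ^ p * (1 - s) ^ p := Real.mul_rpow hu0.le (by linarith)
        _ = (1 - s) ^ p * u ^ p := mul_comm _ _
    have h2 : u ^ (p - 1) * (u - s) ^ p ≤ (1 - s) ^ p * u ^ (2 * p - 1) := by
      have h3 : u ^ (p - 1) * (u - s) ^ p ≤ u ^ (p - 1) * ((1 - s) ^ p * u ^ p) :=
        mul_le_mul_of_nonneg_left key (Real.rpow_nonneg hu0.le _)
      have h4 : u ^ (p - 1) * u ^ p = u ^ (2 * p - 1) := by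
        rw [← Real.rpow_add hu0]; ring_nf
      calc u ^ (p - 1) * (u - s) ^ p ≤ u ^ (p - 1) * ((1 - s) ^ p * u ^ p) := h3
        _ = (1 - s) ^ p * (u ^ (p - 1) * u ^ p) := by ring
        _ = (1 - s) ^ p * u ^ (2 * p - 1) := by rw [h4]
    simp only [hφ]
    nlinarith [hp.le]
  -- FTC lower bound
  have main := intervalIntegral.sub_le_integral_of_hasDeriv_right_of_le hab hcont hderiv hφint hφg
  -- compute g 1 - g s
  have hg1 : g 1 = (1 - s) ^ p := by
    simp [hg, Real.one_rpow]
  have hgs : g s = 0 := by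
    simp [hg, Real.zero_rpow hp.ne']
  -- compute the integral of φ
  have hφeq : (∫ y in s..1, φ y)
      = (1 - s) ^ p * (1 - s ^ (2 * p)) / 2
        + p * ∫ u in Set.Ioo s 1, u ^ p * (u - s) ^ (p - 1) := by
    rw [intervalIntegral.integral_add hi1 hi2]
    have e1 : (∫ y in s..1, p * ((1 - s) ^ p * y ^ (2 * p - 1)))
        = (1 - s) ^ p * (1 - s ^ (2 * p)) / 2 := by
      rw [intervalIntegral.integral_const_mul, intervalIntegral.integral_const_mul,
        integral_rpow (Or.inl (by linarith))]
      rw [Real.one_rpow]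
      have : 2 * p - 1 + 1 = 2 * p := by ring
      rw [this]
      field_simp
    have e2 : (∫ y in s..1, p * (y ^ p * (y - s) ^ (p - 1)))
        = p * ∫ u in Set.Ioo s 1, u ^ p * (u - s) ^ (p - 1) := by
      rw [intervalIntegral.integral_const_mul, intervalIntegral.integral_of_le hab,
        MeasureTheory.integral_Ioc_eq_integral_Ioo]
    rw [e1, e2]
  rw [hg1, hgs, sub_zero, hφeq] at main
  have hnn : 0 ≤ s ^ (2 * p) := Real.rpow_nonneg hs0.le _
  linarith

/-- Pointwise lower bound on the kernel. -/
lemma zH_pointwise (H : ℝ) (hH : H ∈ Set.Ioo (1/2 : ℝ) 1) (s : ℝ) (hs : s ∈ Set.Ioo (0:ℝ) 1) :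
    c_H H / 2 * (s ^ ((1:ℝ)/2 - H) * (1 - s) ^ (H - 1/2) * (1 + s ^ (2*H - 1)))
      ≤ z_H H 1 s := by
  obtain ⟨hs0, hs1⟩ := hs
  obtain ⟨hH1, hH2⟩ := hH
  have hp : 0 < H - 1/2 := by linarith
  have hz : z_H H 1 s = (H - 1/2) * c_H H * s ^ ((1:ℝ)/2 - H) *
      ∫ u in Set.Ioo s 1, u ^ (H - 1/2) * (u - s) ^ (H - 3/2) := by
    rw [z_H, if_pos ⟨hs0, hs1⟩]
  have hkey := key_integral_bound (H - 1/2) s hp hs0 hs1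
  rw [show 2 * (H - 1/2) = 2*H - 1 by ring, show (H - 1/2) - 1 = H - 3/2 by ring] at hkey
  have hI : (1 - s) ^ (H - 1/2) * (1 + s ^ (2*H - 1)) / 2
      ≤ (H - 1/2) * ∫ u in Set.Ioo s 1, u ^ (H - 1/2) * (u - s) ^ (H - 3/2) := hkey
  have hcnn : 0 ≤ c_H H := cH_nonneg H (by linarith)
  have hspow : 0 < s ^ ((1:ℝ)/2 - H) := Real.rpow_pos_of_pos hs0 _
  calc c_H H / 2 * (s ^ ((1:ℝ)/2 - H) * (1 - s) ^ (H - 1/2) * (1 + s ^ (2*H - 1)))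
      = c_H H * s ^ ((1:ℝ)/2 - H) *
        ((1 - s) ^ (H - 1/2) * (1 + s ^ (2*H - 1)) / 2) := by ring
    _ ≤ c_H H * s ^ ((1:ℝ)/2 - H) *
        ((H - 1/2) * ∫ u in Set.Ioo s 1, u ^ (H - 1/2) * (u - s) ^ (H - 3/2)) := by
        apply mul_le_mul_of_nonneg_left hI
        positivity
    _ = z_H H 1 s := by rw [hz]; ring

/-- For `H ∈ (1/2,1)`:
`∫_0^1 (z_H(1,s))^4 ds ≥ (c_H^4/16) ∫_0^1 s^{4(1/2−H)}(1−s)^{4(H−1/2)}(1+s^{2H−1})^4 ds`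
(in the extended reals). -/
theorem zH_fourth_integral_lower_bound (H : ℝ) (hH : H ∈ Set.Ioo (1/2 : ℝ) 1) :
    ENNReal.ofReal (c_H H ^ 4 / 16) *
        ∫⁻ s in Set.Ioo (0:ℝ) 1,
          ENNReal.ofReal
            (s ^ (4 * ((1:ℝ)/2 - H)) * (1 - s) ^ (4 * (H - 1/2)) * (1 + s ^ (2*H - 1)) ^ 4)
      ≤ ∫⁻ s in Set.Ioo (0:ℝ) 1, ENNReal.ofReal (z_H H 1 s ^ 4) := by
  rw [← MeasureTheory.lintegral_const_mul' _ _ ENNReal.ofReal_ne_top]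
  apply MeasureTheory.lintegral_mono_ae
  filter_upwards [MeasureTheory.ae_restrict_mem measurableSet_Ioo] with s hs
  rw [← ENNReal.ofReal_mul (by positivity)]
  apply ENNReal.ofReal_le_ofReal
  -- reduce to the pointwise bound
  obtain ⟨hs0, hs1⟩ := hs
  have hkey := zH_pointwise H hH s ⟨hs0, hs1⟩
  have hLnn : 0 ≤ c_H H / 2 * (s ^ ((1:ℝ)/2 - H) * (1 - s) ^ (H - 1/2) * (1 + s ^ (2*H - 1))) := by
    have hcnn : 0 ≤ c_H H := cH_nonneg H (by linarith [hH.1])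
    have h1 : (0:ℝ) ≤ s ^ ((1:ℝ)/2 - H) := (Real.rpow_pos_of_pos hs0 _).le
    have h2 : (0:ℝ) ≤ (1 - s) ^ (H - 1/2) := Real.rpow_nonneg (by linarith) _
    have h3 : (0:ℝ) ≤ 1 + s ^ (2*H - 1) := by positivity
    positivity
  have hpow := pow_le_pow_left₀ hLnn hkey 4
  calc c_H H ^ 4 / 16 *
        (s ^ (4 * ((1:ℝ)/2 - H)) * (1 - s) ^ (4 * (H - 1/2)) * (1 + s ^ (2*H - 1)) ^ 4)
      = (c_H H / 2 * (s ^ ((1:ℝ)/2 - H) * (1 - s) ^ (H - 1/2) * (1 + s ^ (2*H - 1)))) ^ 4 := by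
        have e1 : (s ^ ((1:ℝ)/2 - H)) ^ (4:ℕ) = s ^ (4 * ((1:ℝ)/2 - H)) := by
          rw [← Real.rpow_natCast (s ^ ((1:ℝ)/2 - H)) 4, ← Real.rpow_mul hs0.le]
          norm_num [mul_comm]
        have e2 : ((1 - s) ^ (H - 1/2)) ^ (4:ℕ) = (1 - s) ^ (4 * (H - 1/2)) := by
          rw [← Real.rpow_natCast ((1 - s) ^ (H - 1/2)) 4,
            ← Real.rpow_mul (by linarith : (0:ℝ) ≤ 1 - s)]
          norm_num [mul_comm]
        rw [mul_pow, mul_pow, mul_pow, e1, e2]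
        ring
    _ ≤ z_H H 1 s ^ 4 := hpow
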